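/- Let λ > 0, c > 0 with 1 < cλ < 3, T ∈ ℕ with T ≥ 1, and for 1 ≤ t ≤ T define Δ_t = (c/t)·∏_{s=t+1}^{T} (1 − cλ/s) (empty product = 1). Let 0 ≤ V_C ≤ V_N be reals and let 0 ≤ m ≤ T. Then for every function σ : {1,…,T} → {V_C, V_N} that takes the value V_C at exactly m indices, ∑_{t=1}^{T−m} Δ_t² V_N² + ∑_{t=T−m+1}^{T} Δ_t² V_C² ≤ ∑_{t=1}^{T} Δ_t² σ(t)². (Processing all noisy data before all clean data minimizes the accumulated noise ∑_t Δ_t² E[‖Z_t‖²] over all orderings when the learning rate constant satisfies c > 1/λ; this is part 2 of the data-order theorem.) -/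

import Mathlib

open Finset

private lemma delta_step (lam c : ℝ) (hc : 0 < c)
    (h1 : 1 < c * lam) (h3 : c * lam < 3)
    (T : ℕ) (Δ : ℕ → ℝ)
    (hΔ : ∀ t, Δ t = (c / t) * ∏ s ∈ Finset.Icc (t + 1) T, (1 - c * lam / s))
    (t : ℕ) (ht : 1 ≤ t) (htT : t + 1 ≤ T) :
    Δ t ^ 2 ≤ Δ (t + 1) ^ 2 := by
  have ht0 : (0:ℝ) < (t:ℝ) := by exact_mod_cast ht
  have ht1 : (0:ℝ) < (t:ℝ) + 1 := by linarith
  have hins : Finset.Icc (t + 1) T = insert (t + 1) (Finset.Icc (t + 2) T) := by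
    ext x
    simp only [Finset.mem_Icc, Finset.mem_insert]
    omega
  have hnot : t + 1 ∉ Finset.Icc (t + 2) T := by simp
  have hkey : Δ t = (((t:ℝ) + 1 - c * lam) / t) * Δ (t + 1) := by
    rw [hΔ t, hΔ (t + 1), hins, Finset.prod_insert hnot]
    push_cast
    field_simp
  have hx2 : ((t:ℝ) + 1 - c * lam) ^ 2 ≤ (t:ℝ) ^ 2 := by
    have ht1' : (1:ℝ) ≤ (t:ℝ) := by exact_mod_cast ht
    nlinarith [mul_nonneg (by linarith : (0:ℝ) ≤ c * lam - 1)
      (by linarith : (0:ℝ) ≤ 2 * (t:ℝ) + 1 - c * lam)]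
  have hr : (((t:ℝ) + 1 - c * lam) / t) ^ 2 ≤ 1 := by
    rw [div_pow, div_le_one (by positivity)]
    exact hx2
  calc Δ t ^ 2 = (((t:ℝ) + 1 - c * lam) / t) ^ 2 * Δ (t + 1) ^ 2 := by
        rw [hkey]; ring
    _ ≤ 1 * Δ (t + 1) ^ 2 :=
        mul_le_mul_of_nonneg_right hr (sq_nonneg _)
    _ = Δ (t + 1) ^ 2 := one_mul _

private lemma delta_mono (lam c : ℝ) (hc : 0 < c)
    (h1 : 1 < c * lam) (h3 : c * lam < 3)
    (T : ℕ) (Δ : ℕ → ℝ)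
    (hΔ : ∀ t, Δ t = (c / t) * ∏ s ∈ Finset.Icc (t + 1) T, (1 - c * lam / s))
    {a b : ℕ} (ha : 1 ≤ a) (hab : a ≤ b) (hbT : b ≤ T) :
    Δ a ^ 2 ≤ Δ b ^ 2 := by
  induction b with
  | zero => omega
  | succ n ih =>
    rcases Nat.lt_or_ge a (n + 1) with h | h
    · exact le_trans (ih (by omega) (by omega))
        (delta_step lam c hc h1 h3 T Δ hΔ n (by omega) hbT)
    · have : a = n + 1 := by omega
      subst this; exact le_rfl

/-- Data-order theorem, part 2 (noisy first is optimal for `1 < cλ < 3`): with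
the SGD noise weights `Δ t = (c/t) ∏_{s=t+1}^T (1 - cλ/s)` and any assignment
`σ` of noise levels from `{V_C, V_N}` (with `V_C ≤ V_N`) that uses `V_C` at
exactly `m` indices, the accumulated noise is minimized by placing the noisy
level `V_N` at the first `T - m` steps and the clean level `V_C` at the last
`m` steps. -/
theorem statement_9 (lam c : ℝ) (hlam : 0 < lam) (hc : 0 < c)
    (h1 : 1 < c * lam) (h3 : c * lam < 3)
    (T : ℕ) (hT : 1 ≤ T) (Δ : ℕ → ℝ)
    (hΔ : ∀ t, Δ t = (c / t) * ∏ s ∈ Finset.Icc (t + 1) T, (1 - c * lam / s))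
    (VC VN : ℝ) (hVC : 0 ≤ VC) (hVCN : VC ≤ VN)
    (m : ℕ) (hm : m ≤ T)
    (σ : ℕ → ℝ)
    (hσval : ∀ t ∈ Finset.Icc 1 T, σ t = VC ∨ σ t = VN)
    (hσcard : ((Finset.Icc 1 T).filter (fun t => σ t = VC)).card = m) :
    ∑ t ∈ Finset.Icc 1 (T - m), (Δ t) ^ 2 * VN ^ 2 +
        ∑ t ∈ Finset.Icc (T - m + 1) T, (Δ t) ^ 2 * VC ^ 2 ≤
      ∑ t ∈ Finset.Icc 1 T, (Δ t) ^ 2 * (σ t) ^ 2 := by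
  set S : Finset ℕ := (Finset.Icc 1 T).filter (fun t => σ t = VC) with hS
  set Top : Finset ℕ := Finset.Icc (T - m + 1) T with hTop
  set w : ℕ → ℝ := fun t => Δ t ^ 2 with hw
  have hwnonneg : ∀ t, 0 ≤ w t := fun t => sq_nonneg _
  have hSsub : S ⊆ Finset.Icc 1 T := Finset.filter_subset _ _
  have hTopcard : Top.card = m := by
    rw [hTop, Nat.card_Icc]; omega
  -- key combinatorial inequality: ∑_{S} w ≤ ∑_{Top} w
  have hkey : ∑ t ∈ S, w t ≤ ∑ t ∈ Top, w t := by
    have hsplitS : ∑ t ∈ S \ Top, w t + ∑ t ∈ S ∩ Top, w t = ∑ t ∈ S, w t := by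
      rw [← Finset.sdiff_inter_self_left S Top]
      exact Finset.sum_sdiff (Finset.inter_subset_left)
    have hsplitT : ∑ t ∈ Top \ S, w t + ∑ t ∈ S ∩ Top, w t = ∑ t ∈ Top, w t := by
      rw [Finset.inter_comm, ← Finset.sdiff_inter_self_left Top S]
      exact Finset.sum_sdiff (Finset.inter_subset_left)
    have hcard : (S \ Top).card = (Top \ S).card := by
      have h1' := Finset.card_sdiff_add_card_inter S Top
      have h2' := Finset.card_sdiff_add_card_inter Top S
      rw [Finset.inter_comm Top S] at h2'
      omega
    rcases Nat.eq_zero_or_pos m with hm0 | hm0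
    · have : S = ∅ := Finset.card_eq_zero.mp (hσcard.trans hm0)
      simp [this, Finset.sum_nonneg fun t _ => hwnonneg t]
    · have hTmT : T - m + 1 ≤ T := by omega
      have hupper : ∑ t ∈ S \ Top, w t ≤ (S \ Top).card • w (T - m + 1) := by
        apply Finset.sum_le_card_nsmul
        intro t ht
        obtain ⟨htS, htTop⟩ := Finset.mem_sdiff.mp ht
        obtain ⟨ht1, htT⟩ := Finset.mem_Icc.mp (hSsub htS)
        have : ¬ (T - m + 1 ≤ t ∧ t ≤ T) := by
          simpa [hTop, Finset.mem_Icc] using htTop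
        exact delta_mono lam c hc h1 h3 T Δ hΔ ht1 (by omega) hTmT
      have hlower : (Top \ S).card • w (T - m + 1) ≤ ∑ t ∈ Top \ S, w t := by
        apply Finset.card_nsmul_le_sum
        intro t ht
        obtain ⟨htTop, _⟩ := Finset.mem_sdiff.mp ht
        obtain ⟨ht1, htT⟩ := Finset.mem_Icc.mp htTop
        exact delta_mono lam c hc h1 h3 T Δ hΔ (by omega) ht1 htT
      rw [hcard] at hupper
      linarith [hupper.trans hlower]
  -- rewrite LHS
  have hLsplit : ∑ t ∈ Finset.Icc 1 (T - m), w t + ∑ t ∈ Top, w t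
      = ∑ t ∈ Finset.Icc 1 T, w t := by
    have e1 : Finset.Icc 1 (T - m) = Finset.Ioc 0 (T - m) := by
      ext x; simp [Finset.mem_Icc, Finset.mem_Ioc]; omega
    have e2 : Top = Finset.Ioc (T - m) T := by
      rw [hTop]; ext x; simp [Finset.mem_Icc, Finset.mem_Ioc]
    have e3 : Finset.Icc 1 T = Finset.Ioc 0 T := by
      ext x; simp [Finset.mem_Icc, Finset.mem_Ioc]; omega
    rw [e1, e2, e3]
    exact Finset.sum_Ioc_consecutive w (by omega) (by omega)
  -- rewrite RHS
  have hRsplit : ∑ t ∈ S, w t + ∑ t ∈ Finset.Icc 1 T \ S, w t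
      = ∑ t ∈ Finset.Icc 1 T, w t := by
    rw [add_comm]; exact Finset.sum_sdiff hSsub
  have hRHS : ∑ t ∈ Finset.Icc 1 T, (Δ t) ^ 2 * (σ t) ^ 2
      = (∑ t ∈ S, w t) * VC ^ 2 + (∑ t ∈ Finset.Icc 1 T \ S, w t) * VN ^ 2 := by
    rw [← Finset.sum_sdiff hSsub, Finset.sum_mul, Finset.sum_mul]
    rw [add_comm]
    congr 1
    · apply Finset.sum_congr rfl
      intro t ht
      have : σ t = VC := (Finset.mem_filter.mp ht).2
      rw [this]
    · apply Finset.sum_congr rfl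
      intro t ht
      obtain ⟨htIcc, htS⟩ := Finset.mem_sdiff.mp ht
      have hne : σ t ≠ VC := fun h => htS (Finset.mem_filter.mpr ⟨htIcc, h⟩)
      have : σ t = VN := (hσval t htIcc).resolve_left hne
      rw [this]
  have hLHS : ∑ t ∈ Finset.Icc 1 (T - m), (Δ t) ^ 2 * VN ^ 2 +
      ∑ t ∈ Finset.Icc (T - m + 1) T, (Δ t) ^ 2 * VC ^ 2
      = (∑ t ∈ Finset.Icc 1 (T - m), w t) * VN ^ 2 + (∑ t ∈ Top, w t) * VC ^ 2 := by
    rw [Finset.sum_mul, Finset.sum_mul]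
  rw [hLHS, hRHS]
  have hVN2 : VC ^ 2 ≤ VN ^ 2 := by nlinarith
  have hWnn : 0 ≤ ∑ t ∈ S, w t := Finset.sum_nonneg fun t _ => hwnonneg t
  nlinarith [hkey, hLsplit, hRsplit, hVN2,
    Finset.sum_nonneg (fun t (_ : t ∈ Top) => hwnonneg t)]
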